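/- Let X, Y be topological spaces, Φ : X → 2^Y a multifunction, u : Gr(Φ) → ℝ∪{±∞}, and x ∈ Dom(Φ). The value function u*(z) = inf_{y ∈ Φ(z)} u(z,y) is upper semicontinuous at x if and only if u is feasible path transfer upper semicontinuous at x, i.e., for each y ∈ Φ(x) and γ ∈ ℝ with u(x,y) < γ, there is a neighborhood U(x) such that for each x' ∈ U(x) there exists y' ∈ Φ(x') with u(x',y') < γ. -/
import Mathlib

open Filter Topology Set

lemma biInf_lt_iff' {Y : Type*} (S : Set Y) (f : Y → EReal) (c : EReal) :
    (⨅ y ∈ S, f y) < c ↔ ∃ y ∈ S, f y < c := by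
  simp [iInf_lt_iff]

/-- The value function `z ↦ ⨅ y ∈ Φ z, u z y` is upper semicontinuous at `x` if and only if `u`
is feasible path transfer upper semicontinuous at `x`: for each `y ∈ Φ x` and real `γ` with
`u x y < γ` there is a neighborhood of `x` on which each point `x'` admits some `y' ∈ Φ x'` with
`u x' y' < γ`. -/
theorem stmt3 {X Y : Type*} [TopologicalSpace X] [TopologicalSpace Y]
    (Φ : X → Set Y) (u : X → Y → EReal) (x : X) (hx : (Φ x).Nonempty) :
    UpperSemicontinuousAt (fun z => ⨅ y ∈ Φ z, u z y) x ↔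
      ∀ y ∈ Φ x, ∀ γ : ℝ, u x y < (γ : EReal) →
        ∀ᶠ x' in 𝓝 x, ∃ y' ∈ Φ x', u x' y' < (γ : EReal) := by
  constructor
  · intro h y hy γ hγ
    have hlt : (⨅ y ∈ Φ x, u x y) < (γ : EReal) :=
      lt_of_le_of_lt (biInf_le _ hy) hγ
    filter_upwards [h _ hlt] with x' hx'
    exact (biInf_lt_iff' _ _ _).1 hx'
  · intro h γ' hγ'
    obtain ⟨y, hy, hyγ'⟩ := (biInf_lt_iff' _ _ _).1 hγ'
    obtain ⟨γ, h1, h2⟩ := EReal.exists_between_coe_real hyγ'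
    filter_upwards [h y hy γ h1] with x' ⟨y', hy', hlt⟩
    exact lt_trans (lt_of_le_of_lt (biInf_le _ hy') hlt) h2
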